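/- arXiv:2512.01833 — 3 statements merged into one kernel-verified Lean document; each statement's English description precedes it below -/
import Mathlib

section
/- For every real number x ≥ 0 and every natural number L, the Poisson tail satisfies ∑_{n=0}^{L} e^{-x} x^n / n! ≥ 1 - (max(2, x))^L / L!. Equivalently, ∑_{n=L+1}^{∞} e^{-x} x^n / n! ≤ (max(2, x))^L / L!. -/
/-- Poisson tail bound (Lemma 4, part 1, of the paper): for `x ≥ 0` and `L : ℕ`,
`∑_{n=0}^{L} e^{-x} x^n / n! ≥ 1 - (max 2 x)^L / L!`, and equivalently the tail
`∑_{n=L+1}^{∞} e^{-x} x^n / n! ≤ (max 2 x)^L / L!`. -/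
theorem poisson_tail_bound (x : ℝ) (hx : 0 ≤ x) (L : ℕ) :
    1 - (max 2 x) ^ L / (Nat.factorial L : ℝ) ≤
      ∑ n ∈ Finset.range (L + 1), Real.exp (-x) * x ^ n / (Nat.factorial n : ℝ) ∧
    (∑' k : ℕ, Real.exp (-x) * x ^ (L + 1 + k) / (Nat.factorial (L + 1 + k) : ℝ)) ≤
      (max 2 x) ^ L / (Nat.factorial L : ℝ) := by
  set f : ℕ → ℝ := fun n => Real.exp (-x) * x ^ n / (Nat.factorial n : ℝ) with hf
  have hsum0 : Summable (fun n : ℕ => x ^ n / (Nat.factorial n : ℝ)) :=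
    Real.summable_pow_div_factorial x
  have hsumf : Summable f := by
    have := hsum0.mul_left (Real.exp (-x))
    simpa [hf, mul_div_assoc] using this
  have hexp : (∑' n : ℕ, x ^ n / (Nat.factorial n : ℝ)) = Real.exp x := by
    rw [Real.exp_eq_exp_ℝ, NormedSpace.exp_eq_tsum_div]
  have htotal : (∑' n : ℕ, f n) = 1 := by
    have : (∑' n : ℕ, f n) = Real.exp (-x) * ∑' n : ℕ, x ^ n / (Nat.factorial n : ℝ) := by
      rw [← tsum_mul_left]
      simp [hf, mul_div_assoc]
    rw [this, hexp, ← Real.exp_add]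
    simp
  -- bounding sequence
  set g : ℕ → ℝ := fun k =>
    Real.exp (-x) * (x ^ L / (Nat.factorial L : ℝ)) * (x ^ (k + 1) / (Nat.factorial (k + 1) : ℝ))
    with hg
  have hsumg : Summable g := by
    have h1 : Summable (fun k : ℕ => x ^ (k + 1) / (Nat.factorial (k + 1) : ℝ)) :=
      (summable_nat_add_iff 1).mpr hsum0
    simpa [hg] using h1.mul_left (Real.exp (-x) * (x ^ L / (Nat.factorial L : ℝ)))
  have hle : ∀ k : ℕ, f (L + 1 + k) ≤ g k := by
    intro k
    have hfac : (Nat.factorial L : ℝ) * (Nat.factorial (k + 1) : ℝ) ≤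
        (Nat.factorial (L + 1 + k) : ℝ) := by
      have hd : Nat.factorial L * Nat.factorial (k + 1) ∣ Nat.factorial (L + (k + 1)) :=
        Nat.factorial_mul_factorial_dvd_factorial_add L (k + 1)
      have := Nat.le_of_dvd (Nat.factorial_pos _) hd
      have h2 : L + (k + 1) = L + 1 + k := by ring
      exact_mod_cast h2 ▸ this
    have hx1 : x ^ (L + 1 + k) = x ^ L * x ^ (k + 1) := by
      rw [← pow_add]; ring_nf
    have hpos1 : (0 : ℝ) < (Nat.factorial (L + 1 + k) : ℝ) := by
      exact_mod_cast Nat.factorial_pos _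
    have hpos2 : (0 : ℝ) < (Nat.factorial L : ℝ) * (Nat.factorial (k + 1) : ℝ) := by
      positivity
    have key : x ^ (L + 1 + k) / (Nat.factorial (L + 1 + k) : ℝ) ≤
        x ^ (L + 1 + k) / ((Nat.factorial L : ℝ) * (Nat.factorial (k + 1) : ℝ)) :=
      div_le_div_of_nonneg_left (by positivity) hpos2 hfac
    calc f (L + 1 + k) = Real.exp (-x) * (x ^ (L + 1 + k) / (Nat.factorial (L + 1 + k) : ℝ)) := by
          rw [hf]; ring
      _ ≤ Real.exp (-x) * (x ^ (L + 1 + k) / ((Nat.factorial L : ℝ) * (Nat.factorial (k + 1) : ℝ))) := by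
          exact mul_le_mul_of_nonneg_left key (Real.exp_nonneg _)
      _ = g k := by rw [hg, hx1]; field_simp
  have hsumftail : Summable (fun k : ℕ => f (L + 1 + k)) := by
    have := (summable_nat_add_iff (L + 1)).mpr hsumf
    simpa [add_comm] using this
  have htail_le : (∑' k : ℕ, f (L + 1 + k)) ≤ ∑' k : ℕ, g k :=
    Summable.tsum_le_tsum hle hsumftail hsumg
  have hgsum : (∑' k : ℕ, g k) ≤ x ^ L / (Nat.factorial L : ℝ) := by
    have h1 : (∑' k : ℕ, g k) = Real.exp (-x) * (x ^ L / (Nat.factorial L : ℝ)) *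
        ∑' k : ℕ, x ^ (k + 1) / (Nat.factorial (k + 1) : ℝ) := by
      rw [hg]
      exact tsum_mul_left
    have h2 : (∑' k : ℕ, x ^ (k + 1) / (Nat.factorial (k + 1) : ℝ)) ≤ Real.exp x := by
      have hsplit := Summable.sum_add_tsum_nat_add 1 hsum0
      have hnn : (0:ℝ) ≤ ∑ n ∈ Finset.range 1, x ^ n / (Nat.factorial n : ℝ) := by
        apply Finset.sum_nonneg; intro i _; positivity
      have : (∑' k : ℕ, x ^ (k + 1) / (Nat.factorial (k + 1) : ℝ)) =
          (∑' n : ℕ, x ^ n / (Nat.factorial n : ℝ)) -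
            ∑ n ∈ Finset.range 1, x ^ n / (Nat.factorial n : ℝ) := by
        linarith [hsplit]
      rw [this, hexp]
      linarith
    calc (∑' k : ℕ, g k) ≤ Real.exp (-x) * (x ^ L / (Nat.factorial L : ℝ)) * Real.exp x := by
          rw [h1]
          apply mul_le_mul_of_nonneg_left h2 (by positivity)
      _ = x ^ L / (Nat.factorial L : ℝ) := by
          rw [mul_comm (Real.exp (-x)) _, mul_assoc, ← Real.exp_add]; simp
  have hxM : x ^ L / (Nat.factorial L : ℝ) ≤ (max 2 x) ^ L / (Nat.factorial L : ℝ) := by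
    gcongr
    exact le_max_right 2 x
  have htail : (∑' k : ℕ, f (L + 1 + k)) ≤ (max 2 x) ^ L / (Nat.factorial L : ℝ) :=
    le_trans htail_le (le_trans hgsum hxM)
  constructor
  · have hsplit := Summable.sum_add_tsum_nat_add (L + 1) hsumf
    have heq : (∑' k : ℕ, f (L + 1 + k)) = ∑' k : ℕ, f (k + (L + 1)) := by
      congr 1; funext k; rw [add_comm (L + 1) k]
    have hpart : (∑ n ∈ Finset.range (L + 1), f n) = 1 - ∑' k : ℕ, f (L + 1 + k) := by
      rw [heq, ← htotal, ← hsplit]; ring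
    rw [show (∑ n ∈ Finset.range (L + 1), Real.exp (-x) * x ^ n / (Nat.factorial n : ℝ)) =
        ∑ n ∈ Finset.range (L + 1), f n from rfl, hpart]
    linarith
  · exact htail
end

section
/- Let E > 0, let ε ∈ (0,1), and let L be a natural number with L + 1 ≥ (E+1) · ln(1/ε). Then (1/(πE)) ∫_{ℂ} e^{-|α|²/E} ( ∑_{n=0}^{L} e^{-|α|²} |α|^{2n} / n! ) dλ(α) ≥ 1 - ε, where the integral is with respect to Lebesgue measure λ on ℂ identified with ℝ². -/
open MeasureTheory

open Real

lemma gauss_integrable_exp (b : ℝ) (hb : 0 < b) :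
    Integrable (fun z : ℂ => Real.exp (-b * ‖z‖ ^ 2)) := by
  have h := GaussianFourier.integrable_cexp_neg_mul_sq_norm_add (V := ℂ) (b := (b:ℂ))
    (by simpa using hb) 0 0
  simp only [zero_mul, add_zero] at h
  refine h.norm.congr (Filter.Eventually.of_forall fun z => ?_)
  show ‖Complex.exp (-(b:ℂ) * ((‖z‖:ℝ):ℂ) ^ 2)‖ = Real.exp (-b * ‖z‖ ^ 2)
  rw [Complex.norm_exp, ← Complex.ofReal_pow, ← Complex.ofReal_neg, ← Complex.ofReal_mul,
    Complex.ofReal_re]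

lemma gauss_integrable (b : ℝ) (hb : 0 < b) (n : ℕ) :
    Integrable (fun z : ℂ => Real.exp (-b * ‖z‖ ^ 2) * ‖z‖ ^ (2*n)) := by
  have hg : Integrable (fun z : ℂ => (n.factorial * (2/b)^n) * Real.exp (-(b/2) * ‖z‖ ^ 2)) :=
    (gauss_integrable_exp (b/2) (by linarith)).const_mul _
  refine hg.mono' ?_ (Filter.Eventually.of_forall fun z => ?_)
  · apply Measurable.aestronglyMeasurable; fun_prop
  · have hfac : (0:ℝ) < n.factorial := by positivity
    have key := Real.pow_div_factorial_le_exp (x := (b/2) * ‖z‖^2) (by positivity) n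
    rw [div_le_iff₀ hfac] at key
    have h4 : (‖z‖^2)^n ≤ n.factorial * (2/b)^n * Real.exp ((b/2) * ‖z‖^2) := by
      calc (‖z‖^2)^n = (2/b)^n * ((b/2) * ‖z‖^2)^n := by
            rw [← mul_pow]; congr 1; field_simp
        _ ≤ (2/b)^n * (Real.exp ((b/2) * ‖z‖^2) * n.factorial) :=
            mul_le_mul_of_nonneg_left key (by positivity)
        _ = n.factorial * (2/b)^n * Real.exp ((b/2) * ‖z‖^2) := by ring
    rw [Real.norm_eq_abs, abs_of_nonneg (by positivity), pow_mul]
    have hexp : Real.exp ((b/2)*‖z‖^2) * Real.exp (-b*‖z‖^2) = Real.exp (-(b/2)*‖z‖^2) := by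
      rw [← Real.exp_add]; ring_nf
    calc Real.exp (-b * ‖z‖^2) * (‖z‖^2)^n
        ≤ Real.exp (-b * ‖z‖^2) * (n.factorial * (2/b)^n * Real.exp ((b/2) * ‖z‖^2)) :=
          mul_le_mul_of_nonneg_left h4 (Real.exp_nonneg _)
      _ = (n.factorial * (2/b)^n) * (Real.exp ((b/2)*‖z‖^2) * Real.exp (-b*‖z‖^2)) := by ring
      _ = (n.factorial * (2/b)^n) * Real.exp (-(b/2) * ‖z‖^2) := by rw [hexp]

lemma gauss_val (b : ℝ) (hb : 0 < b) (n : ℕ) :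
    ∫ z : ℂ, Real.exp (-b * ‖z‖ ^ 2) * ‖z‖ ^ (2*n) = π * n.factorial / b ^ (n+1) := by
  have h : ∀ z : ℂ, Real.exp (-b * ‖z‖ ^ 2) * ‖z‖ ^ (2*n)
      = ‖z‖ ^ ((2*n : ℕ):ℝ) * Real.exp (-b * ‖z‖ ^ (2:ℝ)) := by
    intro z
    rw [show ((2:ℝ)) = ((2:ℕ):ℝ) by norm_num, Real.rpow_natCast, Real.rpow_natCast]
    ring
  simp_rw [h]
  rw [Complex.integral_rpow_mul_exp_neg_mul_rpow (p := 2) one_le_two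
    (lt_of_lt_of_le (by norm_num : (-2:ℝ) < 0) (Nat.cast_nonneg _)) hb]
  rw [show ((2*n : ℕ):ℝ) + 2 = 2*(n+1) by push_cast; ring]
  rw [show (2*((n:ℝ)+1))/2 = ((n:ℝ)+1) by ring,
      show -(2*((n:ℝ)+1))/2 = -((n+1:ℕ):ℝ) by push_cast; ring]
  rw [Real.rpow_neg hb.le, Real.rpow_natCast, Real.Gamma_nat_eq_factorial]
  field_simp

/-- Lemma 4, part 2, of the paper at the level of photon-number statistics:
if `E > 0`, `ε ∈ (0,1)` and `L + 1 ≥ (E+1)·ln(1/ε)`, then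
`(1/(πE)) ∫_ℂ e^{-|α|²/E} (∑_{n=0}^{L} e^{-|α|²}|α|^{2n}/n!) dα ≥ 1 - ε`. -/
theorem thermal_truncation_bound (E ε : ℝ) (hE : 0 < E) (hε0 : 0 < ε) (hε1 : ε < 1)
    (L : ℕ) (hL : (E + 1) * Real.log (1 / ε) ≤ (L : ℝ) + 1) :
    1 - ε ≤ (1 / (Real.pi * E)) *
      ∫ α : ℂ, Real.exp (-‖α‖ ^ 2 / E) *
        ∑ n ∈ Finset.range (L + 1),
          Real.exp (-‖α‖ ^ 2) * ‖α‖ ^ (2 * n) / (Nat.factorial n : ℝ) := by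
  have hE1 : (0:ℝ) < E + 1 := by linarith
  set c : ℝ := 1/E + 1 with hc_def
  have hc : 0 < c := by positivity
  set q : ℝ := E / (E + 1) with hq_def
  have hq0 : 0 < q := by positivity
  have hq1 : q < 1 := by rw [hq_def, div_lt_one hE1]; linarith
  -- rewrite the integrand
  have hcongr : ∀ α : ℂ,
      Real.exp (-‖α‖ ^ 2 / E) *
        ∑ n ∈ Finset.range (L + 1),
          Real.exp (-‖α‖ ^ 2) * ‖α‖ ^ (2 * n) / (Nat.factorial n : ℝ)
      = ∑ n ∈ Finset.range (L + 1),
          Real.exp (-c * ‖α‖ ^ 2) * ‖α‖ ^ (2 * n) / (Nat.factorial n : ℝ) := by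
    intro α
    rw [Finset.mul_sum]
    refine Finset.sum_congr rfl fun n _ => ?_
    rw [mul_div_assoc', ← mul_assoc, ← Real.exp_add]
    congr 2
    rw [hc_def]; field_simp; ring
  simp_rw [hcongr]
  rw [integral_finset_sum _ (fun n _ => ((gauss_integrable c hc n).div_const _))]
  have hval : ∀ n ∈ Finset.range (L+1),
      (∫ α : ℂ, Real.exp (-c * ‖α‖ ^ 2) * ‖α‖ ^ (2 * n) / (Nat.factorial n : ℝ))
        = π * q ^ (n+1) := by
    intro n _
    rw [integral_div, gauss_val c hc n]
    have hfac : (0:ℝ) < n.factorial := by positivity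
    have hcq : c = 1/q := by rw [hc_def, hq_def]; field_simp; ring
    rw [hcq]
    rw [one_div, inv_pow, div_div, div_eq_iff (by positivity)]
    field_simp
  rw [Finset.sum_congr rfl hval]
  have hsum : ∑ n ∈ Finset.range (L+1), π * q ^ (n+1) = π * E * (1 - q^(L+1)) := by
    have : ∑ n ∈ Finset.range (L+1), π * q ^ (n+1)
        = (π * q) * ∑ n ∈ Finset.range (L+1), q ^ n := by
      rw [Finset.mul_sum]; exact Finset.sum_congr rfl fun n _ => by rw [pow_succ]; ring
    rw [this, geom_sum_eq (ne_of_lt hq1)]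
    have hq1' : q - 1 = -(1/(E+1)) := by rw [hq_def]; field_simp; ring
    rw [hq1']
    rw [hq_def]
    field_simp
    ring
  rw [hsum]
  have hπ : (0:ℝ) < π := Real.pi_pos
  have hsimp : (1 / (π * E)) * (π * E * (1 - q^(L+1))) = 1 - q^(L+1) := by
    field_simp
  rw [hsimp]
  -- now show q^(L+1) ≤ ε
  have hkey : q ^ (L+1) ≤ ε := by
    have hlogq : Real.log q ≤ -(1/(E+1)) := by
      have := Real.log_le_sub_one_of_pos hq0
      have hq1' : q - 1 = -(1/(E+1)) := by rw [hq_def]; field_simp; ring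
      linarith [hq1' ▸ this]
    have hlogε : Real.log (1/ε) ≤ ((L:ℝ)+1) / (E+1) := by
      rw [← le_div_iff₀' hE1] at hL; exact hL
    have h1 : Real.log (q ^ (L+1)) ≤ Real.log ε := by
      rw [Real.log_pow]
      have h2 : ((L:ℝ)+1) * (-(1/(E+1))) ≤ Real.log ε := by
        rw [Real.log_div one_ne_zero (ne_of_gt hε0), Real.log_one] at hlogε
        have : -((L:ℝ)+1) / (E+1) ≤ Real.log ε := by
          rw [neg_div]
          linarith
        calc ((L:ℝ)+1) * (-(1/(E+1))) = -((L:ℝ)+1)/(E+1) := by ring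
          _ ≤ Real.log ε := this
      calc ((L+1:ℕ):ℝ) * Real.log q ≤ ((L:ℝ)+1) * (-(1/(E+1))) := by
            push_cast
            exact mul_le_mul_of_nonneg_left hlogq (by positivity)
        _ ≤ Real.log ε := h2
    calc q ^ (L+1) = Real.exp (Real.log (q ^ (L+1))) := (Real.exp_log (by positivity)).symm
      _ ≤ Real.exp (Real.log ε) := Real.exp_le_exp.mpr h1
      _ = ε := Real.exp_log hε0
  linarith
end

section
/- Let ρ be a d×d complex positive semidefinite matrix with trace 1 (a density matrix), and let Π be a d×d Hermitian matrix with 0 ≤ Π ≤ I. If tr(Πρ) ≥ 1 - ε for some ε ≥ 0, then ‖√Π ρ √Π - ρ‖₁ ≤ 2√ε, where √Π denotes the positive semidefinite square root of Π and ‖A‖₁ = tr√(AᴴA) denotes the trace norm. -/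
open scoped ComplexOrder

/-- The positive semidefinite square root of a positive semidefinite matrix
(the definition `Matrix.PosSemidef.sqrt` of the older Mathlib, since removed). -/
noncomputable def Matrix.PosSemidef.sqrt {n 𝕜 : Type*} [Fintype n] [DecidableEq n] [RCLike 𝕜]
    {A : Matrix n n 𝕜} (hA : A.PosSemidef) : Matrix n n 𝕜 :=
  hA.1.eigenvectorUnitary.1 * Matrix.diagonal ((↑) ∘ (Real.sqrt ∘ hA.1.eigenvalues)) *
    (star hA.1.eigenvectorUnitary : Matrix n n 𝕜)

/-- The trace norm of a square complex matrix: `‖A‖₁ = tr √(Aᴴ A)`. -/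
noncomputable def traceNorm {d : ℕ} (A : Matrix (Fin d) (Fin d) ℂ) : ℝ :=
  ((Matrix.posSemidef_conjTranspose_mul_self A).sqrt).trace.re

open Matrix

namespace Matrix.PosSemidef

lemma spec_nonneg {d : ℕ} {A : Matrix (Fin d) (Fin d) ℂ} (hA : A.PosSemidef) :
    ∀ x ∈ spectrum ℝ A, 0 ≤ x := by
  intro x hx
  obtain ⟨i, rfl⟩ := hA.1.spectrum_real_eq_range_eigenvalues ▸ hx
  exact hA.eigenvalues_nonneg i

lemma sqrt_eq_cfc {d : ℕ} {A : Matrix (Fin d) (Fin d) ℂ} (hA : A.PosSemidef) :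
    hA.sqrt = cfc Real.sqrt A := by
  rw [hA.1.cfc_eq Real.sqrt]
  rfl

lemma posSemidef_sqrt {d : ℕ} {A : Matrix (Fin d) (Fin d) ℂ} (hA : A.PosSemidef) :
    hA.sqrt.PosSemidef := by
  rw [Matrix.PosSemidef.sqrt, Matrix.star_eq_conjTranspose]
  refine Matrix.PosSemidef.mul_mul_conjTranspose_same ?_ _
  exact Matrix.posSemidef_diagonal_iff.mpr fun i => by simp [Real.sqrt_nonneg]

lemma sqrt_mul_self {d : ℕ} {A : Matrix (Fin d) (Fin d) ℂ} (hA : A.PosSemidef) :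
    hA.sqrt * hA.sqrt = A := by
  have hsa : IsSelfAdjoint A := hA.1
  rw [sqrt_eq_cfc, ← cfc_mul _ _ A]
  conv_rhs => rw [← cfc_id' ℝ A]
  exact cfc_congr fun x hx => Real.mul_self_sqrt (spec_nonneg hA x hx)

lemma eq_sqrt_of_sq_eq {d : ℕ} {A : Matrix (Fin d) (Fin d) ℂ} (hA : A.PosSemidef)
    (B : Matrix (Fin d) (Fin d) ℂ) (hAB : A ^ 2 = B) {hB : B.PosSemidef} : A = hB.sqrt := by
  have hsa : IsSelfAdjoint A := hA.1
  subst hAB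
  rw [sqrt_eq_cfc, ← cfc_pow_id (R := ℝ) A 2, ← cfc_comp' Real.sqrt (fun x : ℝ => x ^ 2) A]
  conv_lhs => rw [← cfc_id' ℝ A]
  exact cfc_congr fun x hx => (Real.sqrt_sq (spec_nonneg hA x hx)).symm

end Matrix.PosSemidef

namespace GentleAux

variable {d : ℕ}

lemma trace_re_nonneg {M : Matrix (Fin d) (Fin d) ℂ} (hM : M.PosSemidef) :
    0 ≤ M.trace.re := by
  rw [Matrix.trace]
  rw [Complex.re_sum]
  refine Finset.sum_nonneg fun i _ => ?_
  have := hM.re_dotProduct_nonneg (Pi.single i 1)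
  simpa [dotProduct, Pi.single_apply, Matrix.mulVec_single] using this

lemma trace_mul_re_nonneg {A B : Matrix (Fin d) (Fin d) ℂ}
    (hA : A.PosSemidef) (hB : B.PosSemidef) : 0 ≤ (A * B).trace.re := by
  have h1 : A * B = hA.sqrt * (hA.sqrt * B) := by
    rw [← mul_assoc, hA.sqrt_mul_self]
  have h2 : (A * B).trace = (hA.sqrt * B * hA.sqrt).trace := by
    rw [h1, ← Matrix.trace_mul_comm, mul_assoc]
  rw [h2]
  have : (hA.sqrt * B * hA.sqrt).PosSemidef := by
    have := hB.mul_mul_conjTranspose_same hA.sqrt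
    rwa [hA.posSemidef_sqrt.isHermitian.eq] at this
  exact trace_re_nonneg this

lemma conj_mul_conj (V : Matrix (Fin d) (Fin d) ℂ) (hV : Vᴴ * V = 1)
    (a b : Fin d → ℂ) :
    (V * diagonal a * Vᴴ) * (V * diagonal b * Vᴴ) = V * diagonal (a * b) * Vᴴ := by
  have : diagonal a * diagonal b = diagonal (a * b) := by
    rw [Matrix.diagonal_mul_diagonal]; rfl
  calc (V * diagonal a * Vᴴ) * (V * diagonal b * Vᴴ)
      = V * diagonal a * (Vᴴ * V) * diagonal b * Vᴴ := by noncomm_ring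
    _ = V * (diagonal a * diagonal b) * Vᴴ := by rw [hV]; noncomm_ring
    _ = V * diagonal (a * b) * Vᴴ := by rw [this]

end GentleAux

namespace GentleAux

lemma exists_sign (M : Matrix (Fin d) (Fin d) ℂ) (hM : M.IsHermitian) :
    ∃ C : Matrix (Fin d) (Fin d) ℂ, C * C = 1 ∧ Cᴴ = C ∧
      traceNorm M = ((C * M).trace).re := by
  set V : Matrix (Fin d) (Fin d) ℂ := (hM.eigenvectorUnitary : Matrix (Fin d) (Fin d) ℂ) with hVdef
  have hVV : Vᴴ * V = 1 := by
    rw [← Matrix.star_eq_conjTranspose]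
    exact Matrix.mem_unitaryGroup_iff'.mp hM.eigenvectorUnitary.2
  have hVV' : V * Vᴴ = 1 := by
    rw [← Matrix.star_eq_conjTranspose]
    exact Matrix.mem_unitaryGroup_iff.mp hM.eigenvectorUnitary.2
  set ev := hM.eigenvalues with hev
  set f : Fin d → ℂ := fun i => ((if 0 ≤ ev i then (1:ℝ) else -1 : ℝ) : ℂ) with hf
  set e : Fin d → ℂ := fun i => ((ev i : ℝ) : ℂ) with he
  set a : Fin d → ℂ := fun i => ((|ev i| : ℝ) : ℂ) with ha
  have hspec : M = V * diagonal e * Vᴴ := by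
    rw [← Matrix.star_eq_conjTranspose]
    exact hM.spectral_theorem
  have htr : ∀ g : Fin d → ℂ, (V * diagonal g * Vᴴ).trace = ∑ i, g i := by
    intro g
    rw [Matrix.trace_mul_cycle, hVV, one_mul, Matrix.trace_diagonal]
  refine ⟨V * diagonal f * Vᴴ, ?_, ?_, ?_⟩
  · rw [conj_mul_conj V hVV]
    have h1 : f * f = 1 := by
      funext i
      simp only [Pi.mul_apply, Pi.one_apply, hf]
      split <;> norm_num
    rw [h1]
    show V * diagonal (fun _ => 1) * Vᴴ = 1
    rw [show (diagonal (fun _ => (1:ℂ)) : Matrix (Fin d) (Fin d) ℂ) = 1 from Matrix.diagonal_one, mul_one, hVV']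
  · rw [Matrix.conjTranspose_mul, Matrix.conjTranspose_mul,
      Matrix.conjTranspose_conjTranspose, Matrix.diagonal_conjTranspose]
    have h2 : star f = f := by
      funext i
      simp only [Pi.star_apply, hf, Complex.star_def, Complex.conj_ofReal]
    rw [h2, mul_assoc]
  · have hfe : f * e = a := by
      funext i
      simp only [Pi.mul_apply, hf, he, ha]
      split_ifs with hi
      · rw [abs_of_nonneg hi]; norm_num
      · rw [abs_of_neg (lt_of_not_ge hi)]; push_cast; ring
    have hCM : (V * diagonal f * Vᴴ) * M = V * diagonal a * Vᴴ := by
      rw (occs := .pos [1]) [hspec]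
      rw [conj_mul_conj V hVV, hfe]
    have hDpsd : (diagonal a).PosSemidef :=
      Matrix.posSemidef_diagonal_iff.mpr fun i => by
        rw [ha]; exact (Complex.zero_le_real).mpr (abs_nonneg _)
    have hBpsd : (V * diagonal a * Vᴴ).PosSemidef :=
      hDpsd.mul_mul_conjTranspose_same V
    have haa : a * a = e * e := by
      funext i
      simp only [Pi.mul_apply, ha, he, ← Complex.ofReal_mul, abs_mul_abs_self]
    have hsq : (V * diagonal a * Vᴴ) ^ 2 = Mᴴ * M := by
      rw [pow_two, conj_mul_conj V hVV, haa, hM.eq]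
      rw (occs := .pos [1,2]) [hspec]
      rw [conj_mul_conj V hVV]
    have hsqrt : V * diagonal a * Vᴴ = (Matrix.posSemidef_conjTranspose_mul_self M).sqrt :=
      hBpsd.eq_sqrt_of_sq_eq _ hsq
    rw [traceNorm, ← hsqrt, hCM]

end GentleAux

namespace GentleAux

lemma frob_cs (X Y : Matrix (Fin d) (Fin d) ℂ) :
    ((Xᴴ * Y).trace).re ≤
      Real.sqrt ((Xᴴ * X).trace).re * Real.sqrt ((Yᴴ * Y).trace).re := by
  classical
  set toE : Matrix (Fin d) (Fin d) ℂ → EuclideanSpace ℂ (Fin d × Fin d) :=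
    fun A => WithLp.toLp 2 (fun p : Fin d × Fin d => A p.2 p.1) with htoE
  have hins : ∀ A B : Matrix (Fin d) (Fin d) ℂ,
      (inner ℂ (toE A) (toE B) : ℂ) = (Aᴴ * B).trace := by
    intro A B
    simp only [PiLp.inner_apply, RCLike.inner_apply, htoE, Matrix.trace,
      Matrix.diag, Matrix.mul_apply, Matrix.conjTranspose_apply, Fintype.sum_prod_type,
      starRingEnd_apply]
    exact Finset.sum_congr rfl fun _ _ => Finset.sum_congr rfl fun _ _ => mul_comm _ _
  have hnorm : ∀ A : Matrix (Fin d) (Fin d) ℂ,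
      ‖toE A‖ = Real.sqrt ((Aᴴ * A).trace).re := by
    intro A
    rw [← hins A A]
    rw [← RCLike.re_to_complex, inner_self_eq_norm_sq, Real.sqrt_sq (norm_nonneg _)]
  calc ((Xᴴ * Y).trace).re = (inner ℂ (toE X) (toE Y) : ℂ).re := by rw [hins]
    _ ≤ ‖(inner ℂ (toE X) (toE Y) : ℂ)‖ := Complex.re_le_norm _
    _ ≤ ‖toE X‖ * ‖toE Y‖ := norm_inner_le_norm _ _
    _ = _ := by rw [hnorm, hnorm]

end GentleAux

namespace GentleAux

lemma sub_sq_posSemidef {S : Matrix (Fin d) (Fin d) ℂ} (hS : S.PosSemidef)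
    (h1 : (1 - S * S).PosSemidef) : (S - S * S).PosSemidef := by
  classical
  set V : Matrix (Fin d) (Fin d) ℂ := (hS.1.eigenvectorUnitary : Matrix (Fin d) (Fin d) ℂ)
    with hVdef
  have hVV : Vᴴ * V = 1 := by
    rw [← Matrix.star_eq_conjTranspose]
    exact Matrix.mem_unitaryGroup_iff'.mp hS.1.eigenvectorUnitary.2
  set ev := hS.1.eigenvalues with hev
  set e : Fin d → ℂ := fun i => ((ev i : ℝ) : ℂ) with he
  have hspec : S = V * diagonal e * Vᴴ := by
    rw [← Matrix.star_eq_conjTranspose]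
    exact hS.1.spectral_theorem
  -- each eigenvalue is between 0 and 1
  have hub : ∀ i, ev i ≤ 1 := by
    intro i
    set v : Fin d → ℂ := ⇑(hS.1.eigenvectorBasis i) with hv
    have hvec : S *ᵥ v = (ev i : ℝ) • v := hS.1.mulVec_eigenvectorBasis i
    have hnorm : dotProduct (star v) v = 1 := by
      have := hS.1.eigenvectorBasis.orthonormal.1 i
      rw [dotProduct_comm, hv, ← EuclideanSpace.inner_eq_star_dotProduct]
      rw [@inner_self_eq_norm_sq_to_K ℂ] at *
      rw [this]; norm_num
    have hq := h1.dotProduct_mulVec_nonneg v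
    have hcalc : dotProduct (star v) ((1 - S * S) *ᵥ v)
        = 1 - ((ev i : ℝ) * (ev i : ℝ) : ℂ) := by
      rw [Matrix.sub_mulVec, Matrix.one_mulVec, ← Matrix.mulVec_mulVec, hvec,
        Matrix.mulVec_smul, hvec]
      rw [dotProduct_sub, hnorm]
      rw [smul_smul, dotProduct_smul, hnorm]
      push_cast
      simp [smul_eq_mul]
    rw [hcalc] at hq
    have hre := (Complex.le_def.mp hq).1
    rw [← Complex.ofReal_mul] at hre
    simp only [Complex.sub_re, Complex.one_re, Complex.ofReal_re, Complex.zero_re] at hre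
    nlinarith [hre, hS.eigenvalues_nonneg i]
  have hlb : ∀ i, 0 ≤ ev i := fun i => hS.eigenvalues_nonneg i
  -- now S - S*S = V * diagonal (e - e*e) * Vᴴ
  have hS2 : S * S = V * diagonal (e * e) * Vᴴ := by
    rw (occs := .pos [1,2]) [hspec]
    rw [conj_mul_conj V hVV]
  have hdiff : S - S * S = V * diagonal (e - e * e) * Vᴴ := by
    have hds : diagonal (e - e * e) = diagonal e - diagonal (e * e) := by
      exact (Matrix.diagonal_sub _ _).symm
    rw [hds, hS2]
    rw (occs := .pos [1]) [hspec]
    noncomm_ring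
  rw [hdiff]
  have : (diagonal (e - e * e)).PosSemidef := by
    refine Matrix.posSemidef_diagonal_iff.mpr fun i => ?_
    have : (e - e * e) i = (((ev i - ev i * ev i : ℝ)) : ℂ) := by
      push_cast [he]
      simp
    rw [this]
    exact Complex.zero_le_real.mpr (by nlinarith [hub i, hlb i])
  exact this.mul_mul_conjTranspose_same V

end GentleAux

/-- Gentle Operator Lemma (Lemma 1 of the paper): if `ρ` is a density matrix,
`0 ≤ Q ≤ 1` is a measurement operator, and `tr(Qρ) ≥ 1 - ε` with `ε ≥ 0`, then
`‖√Q ρ √Q - ρ‖₁ ≤ 2√ε`. -/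
theorem gentle_operator_lemma {d : ℕ} (ρ Q : Matrix (Fin d) (Fin d) ℂ)
    (hρ : ρ.PosSemidef) (hρtr : ρ.trace = 1)
    (hQ : Q.PosSemidef) (hQ1 : (1 - Q).PosSemidef)
    (ε : ℝ) (hε : 0 ≤ ε) (h : 1 - ε ≤ (Matrix.trace (Q * ρ)).re) :
    traceNorm (hQ.sqrt * ρ * hQ.sqrt - ρ) ≤ 2 * Real.sqrt ε := by
  classical
  set S := hQ.sqrt with hSdef
  set T := hρ.sqrt with hTdef
  have hS : S.PosSemidef := hQ.posSemidef_sqrt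
  have hT : T.PosSemidef := hρ.posSemidef_sqrt
  have hSS : S * S = Q := hQ.sqrt_mul_self
  have hTT : T * T = ρ := hρ.sqrt_mul_self
  have hSh : Sᴴ = S := hS.isHermitian
  have hTh : Tᴴ = T := hT.isHermitian
  set M := S * ρ * S - ρ with hMdef
  have hM : M.IsHermitian := by
    show Mᴴ = M
    rw [hMdef, Matrix.conjTranspose_sub, Matrix.conjTranspose_mul, Matrix.conjTranspose_mul,
      hSh, hρ.isHermitian.eq, ← mul_assoc]
  obtain ⟨C, hCC, hCH, htn⟩ := GentleAux.exists_sign M hM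
  -- basic trace facts
  have htrρ1 : ρ.trace.re = 1 := by rw [hρtr]; simp
  have htQρ_le : (Q * ρ).trace.re ≤ 1 := by
    have h0 : 0 ≤ ((1 - Q) * ρ).trace.re := GentleAux.trace_mul_re_nonneg hQ1 hρ
    have : (1 - Q) * ρ = ρ - Q * ρ := by noncomm_ring
    rw [this, Matrix.trace_sub, Complex.sub_re, htrρ1] at h0
    linarith
  have htSQ : (Q * ρ).trace.re ≤ (S * ρ).trace.re := by
    have hpsd : (S - S * S).PosSemidef := GentleAux.sub_sq_posSemidef hS (by rw [hSS]; exact hQ1)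
    have h0 : 0 ≤ ((S - S * S) * ρ).trace.re := GentleAux.trace_mul_re_nonneg hpsd hρ
    have : (S - S * S) * ρ = S * ρ - Q * ρ := by rw [← hSS]; noncomm_ring
    rw [this, Matrix.trace_sub, Complex.sub_re] at h0
    linarith
  -- the key ε bound
  have hkey : ((S - 1) * ρ * (S - 1)).trace.re ≤ ε := by
    have hexp : (S - 1) * ρ * (S - 1) = S * ρ * S - S * ρ - ρ * S + ρ := by noncomm_ring
    have htrSρS : (S * ρ * S).trace = (Q * ρ).trace := by
      rw [Matrix.trace_mul_cycle, hSS]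
    have htrρS : (ρ * S).trace = (S * ρ).trace := Matrix.trace_mul_comm ρ S
    rw [hexp, Matrix.trace_add, Matrix.trace_sub, Matrix.trace_sub, htrSρS, htrρS]
    simp only [Complex.add_re, Complex.sub_re, htrρ1]
    linarith
  have hkey' : 0 ≤ ((S - 1) * ρ * (S - 1)).trace.re := by
    have : (S - 1) * ρ * (S - 1) = (S - 1) * ρ * (S - 1)ᴴ := by
      rw [Matrix.conjTranspose_sub, hSh, Matrix.conjTranspose_one]
    rw [this]
    exact GentleAux.trace_re_nonneg (hρ.mul_mul_conjTranspose_same (S - 1))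
  -- Cauchy–Schwarz terms
  set X1 := T * (S - 1) * C with hX1def
  set Y1 := T * S with hY1def
  have hX1H : X1ᴴ = C * ((S - 1) * T) := by
    rw [hX1def, Matrix.conjTranspose_mul, Matrix.conjTranspose_mul, Matrix.conjTranspose_sub,
      Matrix.conjTranspose_one, hSh, hTh, hCH]
  have hterm1 : (X1ᴴ * Y1) = C * ((S - 1) * ρ * S) := by
    rw [hX1H, hY1def, ← hTT]; noncomm_ring
  have hXX1 : (X1ᴴ * X1).trace = ((S - 1) * ρ * (S - 1)).trace := by
    have : X1ᴴ * X1 = C * ((S - 1) * ρ * (S - 1)) * C := by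
      rw [hX1H, hX1def, ← hTT]; noncomm_ring
    rw [this, mul_assoc, Matrix.trace_mul_comm, mul_assoc, hCC, mul_one]
  have hYY1 : (Y1ᴴ * Y1).trace = (Q * ρ).trace := by
    have : Y1ᴴ * Y1 = S * ρ * S := by
      rw [hY1def, Matrix.conjTranspose_mul, hSh, hTh, ← hTT]; noncomm_ring
    rw [this, Matrix.trace_mul_cycle, hSS]
  set X2 := T * C with hX2def
  set Y2 := T * (S - 1) with hY2def
  have hX2H : X2ᴴ = C * T := by
    rw [hX2def, Matrix.conjTranspose_mul, hTh, hCH]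
  have hterm2 : (X2ᴴ * Y2) = C * (ρ * (S - 1)) := by
    rw [hX2H, hY2def, ← hTT]; noncomm_ring
  have hXX2 : (X2ᴴ * X2).trace = ρ.trace := by
    have : X2ᴴ * X2 = C * ρ * C := by
      rw [hX2H, hX2def, ← hTT]; noncomm_ring
    rw [this, Matrix.trace_mul_comm, ← mul_assoc, hCC, one_mul]
  have hYY2 : (Y2ᴴ * Y2).trace = ((S - 1) * ρ * (S - 1)).trace := by
    have : Y2ᴴ * Y2 = (S - 1) * ρ * (S - 1) := by
      rw [hY2def, Matrix.conjTranspose_mul, Matrix.conjTranspose_sub,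
        Matrix.conjTranspose_one, hSh, hTh, ← hTT]; noncomm_ring
    rw [this]
  -- combine
  have hsplit : (C * M).trace = (X1ᴴ * Y1).trace + (X2ᴴ * Y2).trace := by
    rw [← Matrix.trace_add, hterm1, hterm2]
    congr 1
    rw [hMdef]; noncomm_ring
  have hb1 : (X1ᴴ * Y1).trace.re ≤ Real.sqrt ε := by
    calc (X1ᴴ * Y1).trace.re
        ≤ Real.sqrt ((X1ᴴ * X1).trace).re * Real.sqrt ((Y1ᴴ * Y1).trace).re :=
          GentleAux.frob_cs X1 Y1
      _ ≤ Real.sqrt ε * 1 := by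
          apply mul_le_mul
          · rw [hXX1]; exact Real.sqrt_le_sqrt hkey
          · rw [hYY1]; exact Real.sqrt_le_one.mpr htQρ_le
          · exact Real.sqrt_nonneg _
          · exact Real.sqrt_nonneg _
      _ = Real.sqrt ε := mul_one _
  have hb2 : (X2ᴴ * Y2).trace.re ≤ Real.sqrt ε := by
    calc (X2ᴴ * Y2).trace.re
        ≤ Real.sqrt ((X2ᴴ * X2).trace).re * Real.sqrt ((Y2ᴴ * Y2).trace).re :=
          GentleAux.frob_cs X2 Y2
      _ ≤ 1 * Real.sqrt ε := by
          apply mul_le_mul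
          · rw [hXX2]; exact Real.sqrt_le_one.mpr (le_of_eq htrρ1)
          · rw [hYY2]; exact Real.sqrt_le_sqrt hkey
          · exact Real.sqrt_nonneg _
          · exact zero_le_one
      _ = Real.sqrt ε := one_mul _
  rw [htn, hsplit, Complex.add_re]
  linarith
end
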